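/- Let 𝔅 be a bornology on a topological space X with a compact base 𝔅₀. If X satisfies S1(Γ_𝔅, Γ_𝔅), then every continuous image of X in the Baire space ω^ω is bounded with respect to eventual domination ≤*. -/

import Mathlib

open Set

universe u

def IsBornology {X : Type u} (B : Set (Set X)) : Prop :=
  ⋃₀ B = univ ∧ (∀ b ∈ B, ∀ b' ⊆ b, b' ∈ B) ∧ ∀ b ∈ B, ∀ b' ∈ B, b ∪ b' ∈ B

def HasClosedBase {X : Type u} [TopologicalSpace X] (B : Set (Set X)) : Prop :=
  ∃ B0 ⊆ B, (∀ b ∈ B0, IsClosed b) ∧ ∀ b ∈ B, ∃ b0 ∈ B0, b ⊆ b0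

def HasCompactBase {X : Type u} [TopologicalSpace X] (B : Set (Set X)) : Prop :=
  ∃ B0 ⊆ B, (∀ b ∈ B0, IsCompact b) ∧ ∀ b ∈ B, ∃ b0 ∈ B0, b ⊆ b0

def IsBCover {X : Type u} [TopologicalSpace X] (B U : Set (Set X)) : Prop :=
  (∀ u ∈ U, IsOpen u) ∧ univ ∉ U ∧ ∀ b ∈ B, ∃ u ∈ U, b ⊆ u

def IsGammaBCover {X : Type u} [TopologicalSpace X] (B U : Set (Set X)) : Prop :=
  U.Infinite ∧ (∀ u ∈ U, IsOpen u ∧ u ≠ univ) ∧ ∀ b ∈ B, {u ∈ U | ¬ b ⊆ u}.Finite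

def IsOpenCover {X : Type u} [TopologicalSpace X] (U : Set (Set X)) : Prop :=
  (∀ u ∈ U, IsOpen u) ∧ ⋃₀ U = univ

def IsOmegaCover {X : Type u} [TopologicalSpace X] (U : Set (Set X)) : Prop :=
  (∀ u ∈ U, IsOpen u) ∧ univ ∉ U ∧ ∀ F : Set X, F.Finite → ∃ u ∈ U, F ⊆ u

def IsGammaCover {X : Type u} [TopologicalSpace X] (U : Set (Set X)) : Prop :=
  U.Infinite ∧ (∀ u ∈ U, IsOpen u) ∧ ∀ x : X, {u ∈ U | x ∉ u}.Finite

def BLindelof {X : Type u} [TopologicalSpace X] (B : Set (Set X)) : Prop :=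
  ∀ U, IsBCover B U → ∃ V ⊆ U, V.Countable ∧ IsBCover B V

def S1 {X : Type u} (A C : Set (Set X) → Prop) : Prop :=
  ∀ U : ℕ → Set (Set X), (∀ n, A (U n)) →
    ∃ V : ℕ → Set X, (∀ n, V n ∈ U n) ∧ C (Set.range V)

def Sfin {X : Type u} (A C : Set (Set X) → Prop) : Prop :=
  ∀ U : ℕ → Set (Set X), (∀ n, A (U n)) →
    ∃ V : ℕ → Set (Set X), (∀ n, (V n).Finite ∧ V n ⊆ U n) ∧ C (⋃ n, V n)

def Ufin {X : Type u} (A C : Set (Set X) → Prop) : Prop :=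
  ∀ U : ℕ → Set (Set X), (∀ n, A (U n)) →
    ∃ V : ℕ → Set (Set X), (∀ n, (V n).Finite ∧ V n ⊆ U n) ∧
      ((∃ n, ⋃₀ V n = univ) ∨ C {s | ∃ n, s = ⋃₀ V n})
theorem stmt13 {X : Type u} [TopologicalSpace X] (B : Set (Set X)) (hB : IsBornology B)
    (hc : HasCompactBase B) (h : S1 (IsGammaBCover B) (IsGammaBCover B))
    (ψ : X → (ℕ → ℕ)) (hψ : Continuous ψ) :
    ∃ g : ℕ → ℕ, ∀ f ∈ Set.range ψ, {n | ¬ f n ≤ g n}.Finite := by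
  classical
  obtain ⟨hcov, hdown, -⟩ := hB
  obtain ⟨B0, hB0B, hB0c, hbase⟩ := hc
  -- every b ∈ B has uniformly bounded coordinates up to N
  have hbound : ∀ b ∈ B, ∀ N : ℕ, ∃ M : ℕ, ∀ x ∈ b, ∀ i ≤ N, ψ x i ≤ M := by
    intro b hb N
    obtain ⟨b0, hb0, hsub⟩ := hbase b hb
    have hcomp := hB0c b0 hb0
    have key : ∀ i : ℕ, ∃ M, ∀ x ∈ b0, ψ x i ≤ M := by
      intro i
      have himg : IsCompact ((fun x => ψ x i) '' b0) :=
        hcomp.image ((continuous_apply i).comp hψ)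
      obtain ⟨M, hM⟩ := himg.finite_of_discrete.bddAbove
      exact ⟨M, fun x hx => hM ⟨x, hx, rfl⟩⟩
    choose M hM using key
    refine ⟨(Finset.range (N + 1)).sup M, fun x hx i hi => ?_⟩
    exact le_trans (hM i x (hsub hx))
      (Finset.le_sup (Finset.mem_range.2 (Nat.lt_succ_of_le hi)))
  by_cases hbd : ∀ n : ℕ, ∃ m, ∀ x : X, ψ x n ≤ m
  · choose g hg using hbd
    refine ⟨g, ?_⟩
    rintro f ⟨x, rfl⟩
    convert Set.finite_empty
    ext n
    simp [hg n x]
  · push_neg at hbd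
    obtain ⟨n₀, hn₀⟩ := hbd
    set W : ℕ → ℕ → Set X := fun n m => {x | ∀ i ≤ max n n₀, ψ x i ≤ m} with hW
    have hWopen : ∀ n m, IsOpen (W n m) := by
      intro n m
      have : W n m = ⋂ i ∈ Set.Iic (max n n₀), (fun x => ψ x i) ⁻¹' (Set.Iic m) := by
        ext x; simp [hW, Set.mem_iInter]
      rw [this]
      exact (Set.finite_Iic _).isOpen_biInter fun i _ =>
        (isOpen_discrete _).preimage ((continuous_apply i).comp hψ)
    have hWne : ∀ n m, W n m ≠ univ := by
      intro n m hcon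
      obtain ⟨x, hx⟩ := hn₀ m
      have : x ∈ W n m := hcon ▸ mem_univ x
      exact absurd (this n₀ (le_max_right n n₀)) (not_le.2 hx)
    have hWmono : ∀ n, ∀ {m m' : ℕ}, m ≤ m' → W n m ⊆ W n m' := by
      intro n m m' hmm x hx i hi
      exact le_trans (hx i hi) hmm
    have hWmem : ∀ (x : X) (n : ℕ), ∃ m, x ∈ W n m := by
      intro x n
      refine ⟨(Finset.range (max n n₀ + 1)).sup (ψ x), fun i hi => ?_⟩
      exact Finset.le_sup (Finset.mem_range.2 (Nat.lt_succ_of_le hi))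
    have hWb : ∀ b ∈ B, ∀ n : ℕ, ∃ M, ∀ m, M ≤ m → b ⊆ W n m := by
      intro b hb n
      obtain ⟨M, hM⟩ := hbound b hb (max n n₀)
      exact ⟨M, fun m hm x hx i hi => le_trans (hM x hx i hi) hm⟩
    have hGamma : ∀ n, IsGammaBCover B (Set.range (W n)) := by
      intro n
      refine ⟨?_, ?_, ?_⟩
      · -- infinite
        intro hfin
        obtain ⟨s, hs, hsmax⟩ := Set.Finite.exists_maximalFor id (Set.range (W n)) hfin
          ⟨W n 0, mem_range_self 0⟩
        obtain ⟨m₀, rfl⟩ := hs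
        have : W n m₀ = univ := by
          apply eq_univ_of_forall
          intro x
          obtain ⟨mx, hmx⟩ := hWmem x n
          have hsub : W n m₀ ⊆ W n (max m₀ mx) := hWmono n (le_max_left _ _)
          have heq : W n m₀ = W n (max m₀ mx) :=
            le_antisymm hsub (hsmax (mem_range_self _) hsub)
          rw [heq]
          exact hWmono n (le_max_right m₀ mx) hmx
        exact hWne n m₀ this
      · rintro u ⟨m, rfl⟩
        exact ⟨hWopen n m, hWne n m⟩
      · intro b hb
        obtain ⟨M, hM⟩ := hWb b hb n
        have hsub : {u ∈ Set.range (W n) | ¬ b ⊆ u} ⊆ W n '' Set.Iio M := by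
          rintro u ⟨⟨m, rfl⟩, hnb⟩
          refine ⟨m, ?_, rfl⟩
          by_contra hm
          exact hnb (hM m (le_of_not_gt hm))
        exact ((Set.finite_Iio M).image _).subset hsub
    obtain ⟨V, hVmem, hVinf, -, hVγ⟩ := h (fun n => Set.range (W n)) hGamma
    choose m hm using hVmem
    -- pick for each j an index k j ≥ j whose value is "new"
    have hkex : ∀ j : ℕ, ∃ i, V i ∉ V '' Set.Iio j := by
      intro j
      by_contra hcon
      push_neg at hcon
      exact hVinf (((Set.finite_Iio j).image V).subset
        (by rintro u ⟨i, rfl⟩; exact hcon i))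
    choose k hk using hkex
    have hkge : ∀ j, j ≤ k j := by
      intro j
      by_contra hlt
      exact hk j ⟨k j, not_le.1 hlt, rfl⟩
    refine ⟨fun j => m (k j), ?_⟩
    rintro f ⟨x, rfl⟩
    have hxB : ({x} : Set X) ∈ B := by
      have hx : x ∈ ⋃₀ B := hcov ▸ mem_univ x
      obtain ⟨b, hbB, hxb⟩ := hx
      exact hdown b hbB {x} (singleton_subset_iff.2 hxb)
    have hF : {u ∈ Set.range V | ¬ ({x} : Set X) ⊆ u}.Finite := hVγ _ hxB
    -- index extraction for members of the finite bad family
    have hidx : ∀ u ∈ Set.range V, ∃ i, V i = u := fun u hu => hu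
    set idx : Set X → ℕ := fun u => if h : u ∈ Set.range V then h.choose else 0 with hidxdef
    have hidxeq : ∀ u ∈ Set.range V, V (idx u) = u := by
      intro u hu
      simp only [hidxdef, dif_pos hu]
      exact hu.choose_spec
    have hsub : {j | ¬ ψ x j ≤ m (k j)} ⊆
        ⋃ u ∈ {u ∈ Set.range V | ¬ ({x} : Set X) ⊆ u}, Set.Iic (idx u) := by
      intro j hj
      have hux : ¬ ({x} : Set X) ⊆ V (k j) := by
        intro hsx
        have hxW : x ∈ W (k j) (m (k j)) := by
          rw [hm (k j)]; exact hsx rfl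
        exact hj (hxW j (le_trans (hkge j) (le_max_left _ _)))
      have hmemF : V (k j) ∈ {u ∈ Set.range V | ¬ ({x} : Set X) ⊆ u} :=
        ⟨mem_range_self _, hux⟩
      refine mem_biUnion hmemF ?_
      -- j ≤ idx (V (k j))
      simp only [Set.mem_Iic]
      by_contra hgt
      push_neg at hgt
      exact hk j ⟨idx (V (k j)), hgt, hidxeq _ (mem_range_self _)⟩
    exact (hF.biUnion fun u _ => Set.finite_Iic _).subset hsub
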